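/- Consider the channels on input alphabet {0,1}² defined as follows: W_b outputs t = x + y + N1 in GF(3) and W_e outputs z = 2x − 2y + N2 in {−2,…,3}, where N1, N2 are independent and uniform on {0,1}. If X = Y is uniform on {0,1} (inputs perfectly correlated), then I(Z ∧ XY) = 0 while I(T ∧ XY) = 1/2. -/

import Mathlib

open scoped BigOperators

noncomputable def entropy {A : Type} [Fintype A] (p : A → ℝ) : ℝ :=
  -∑ a, p a * Real.logb 2 (p a)

noncomputable def mutualInfo {A B : Type} [Fintype A] [Fintype B]
    (p : A × B → ℝ) : ℝ :=
  entropy (fun a => ∑ b, p (a, b)) + entropy (fun b => ∑ a, p (a, b)) - entropy p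

/-- Bob's channel: `t = x + y + N1` in `GF(3)`, `N1` uniform on `{0,1}`. -/
noncomputable def WbEx (x y : Fin 2) (t : ZMod 3) : ℝ :=
  (1 / 2) * ((if t = ((x.val + y.val : ℕ) : ZMod 3) then 1 else 0) +
    (if t = ((x.val + y.val + 1 : ℕ) : ZMod 3) then 1 else 0))

/-- Eve's channel: `z = 2x − 2y + N2 ∈ {−2,…,3}`, `N2` uniform on `{0,1}`;
the output alphabet is encoded as `Fin 6` with value `z.val − 2 ∈ {−2,…,3}`. -/
noncomputable def WeEx (x y : Fin 2) (z : Fin 6) : ℝ :=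
  (1 / 2) * ((if (z.val : ℤ) - 2 = 2 * (x.val : ℤ) - 2 * (y.val : ℤ) then 1 else 0) +
    (if (z.val : ℤ) - 2 = 2 * (x.val : ℤ) - 2 * (y.val : ℤ) + 1 then 1 else 0))

/-- Perfectly correlated uniform inputs: `X = Y` uniform on `{0,1}`. -/
noncomputable def pCorr (xy : Fin 2 × Fin 2) : ℝ :=
  if xy.1 = xy.2 then 1 / 2 else 0

/-- with perfectly correlated inputs, `I(Z ∧ XY) = 0` while
`I(T ∧ XY) = 1/2`. -/
theorem stmt9 :
    mutualInfo (fun p : (Fin 2 × Fin 2) × Fin 6 => pCorr p.1 * WeEx p.1.1 p.1.2 p.2) = 0 ∧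
    mutualInfo (fun p : (Fin 2 × Fin 2) × ZMod 3 => pCorr p.1 * WbEx p.1.1 p.1.2 p.2)
      = 1 / 2 := by
  have h2 : Real.logb 2 (1/2) = -1 := by
    rw [one_div, Real.logb_inv, Real.logb_self_eq_one] <;> norm_num
  have h4 : Real.logb 2 (1/4) = -2 := by
    have : (1/4 : ℝ) = (1/2) * (1/2) := by norm_num
    rw [this, Real.logb_mul (by norm_num) (by norm_num), h2]; norm_num
  have hz : ∀ f : ZMod 3 → ℝ, ∑ t, f t = f 0 + f 1 + f 2 := fun f => by
    show ∑ t : Fin 3, f t = _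
    exact Fin.sum_univ_three (M := ℝ) f
  constructor
  · simp [mutualInfo, entropy, Fintype.sum_prod_type, Fin.sum_univ_succ, WeEx, pCorr]
    norm_num [h2, h4]
  · simp +decide [mutualInfo, entropy, Fintype.sum_prod_type, Fin.sum_univ_succ, hz, WbEx, pCorr]
    norm_num [h2, h4]
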